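/- Let n ≥ 2 and let F : ℝⁿ → ℝ be three times continuously differentiable. Let x₀ ∈ ℝⁿ with ∇F(x₀) ≠ 0, and let H be the Hessian of F at x₀ (a self-adjoint operator). Suppose v₁ is a unit eigenvector of H with eigenvalue λ₁ < 0 which is the smallest eigenvalue of H, let λₙ ≥ 0 be the largest eigenvalue of H, and assume ⟨v₁, ∇F(x₀)⟩ = 0. Set d = 2√(n−1)·‖∇F(x₀)‖/|λ₁|, and let M ≥ 0 be such that for every point ξ on the segment from x₀ − d·v₁ to x₀ + d·v₁ and all unit vectors u, w ∈ ℝⁿ, the third derivative satisfies |D³F(ξ)(v₁, u, w)| ≤ M. Assume moreover M ≤ (1/2)·λ₁²/(n·√(n−1)·‖∇F(x₀)‖) and λ₁/n + (1 − 1/n)·λₙ + d·M < 0. Then there exist a real number t with |t| ≤ d and a standard-basis coordinate direction e_j such that at the point x* = x₀ + t·v₁ the partial derivative ∂F/∂x_j(x*) = 0 and the second partial derivative ∂²F/∂x_j²(x*) < 0; i.e., x* is a coordinate local maximum of F lying within distance d of x₀ in the ridge-normal direction v₁. -/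

import Mathlib

open Set in
/-- Positive-slope case of the zero-finding lemma. -/
private lemma rleb_exists_zero_pos (g g' : ℝ → ℝ) (d a b M : ℝ) (hd : 0 < d)
    (hderiv : ∀ t ∈ Icc (-d) d, HasDerivAt g (g' t) t)
    (hlip : ∀ t ∈ Icc (-d) d, |g' t - g' 0| ≤ M * |t|)
    (ha' : a ≤ g' 0) (hb : |g 0| ≤ b)
    (hgap : b ≤ a * d - M * d ^ 2 / 2) :
    ∃ t, |t| ≤ d ∧ g t = 0 := by
  have hdd : -d ≤ d := by linarith
  have hglb : ∀ t ∈ Icc (-d) d, g' 0 - M * |t| ≤ g' t := by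
    intro t ht
    have := (abs_le.mp (hlip t ht)).1
    linarith
  have hcont : ContinuousOn g (Icc (-d) d) := fun t ht =>
    (hderiv t ht).continuousAt.continuousWithinAt
  have hψ : ∀ t ∈ Icc (0:ℝ) d, HasDerivAt (fun t => g t - (a * t - M * t ^ 2 / 2))
      (g' t - (a - M * t)) t := by
    intro t ht
    have h1 : HasDerivAt (fun t : ℝ => a * t - M * t ^ 2 / 2) (a - M * t) t := by
      have := ((hasDerivAt_id t).const_mul a).sub
        ((((hasDerivAt_id t).pow 2).const_mul M).div_const 2)
      simpa [mul_comm, mul_assoc, mul_div_assoc, Pi.sub_def] using this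
    exact (hderiv t ⟨by linarith [ht.1], ht.2⟩).sub h1
  have hmono : MonotoneOn (fun t => g t - (a * t - M * t ^ 2 / 2)) (Icc (0:ℝ) d) := by
    apply monotoneOn_of_deriv_nonneg (convex_Icc 0 d)
    · exact fun t ht => ((hψ t ht).continuousAt.continuousWithinAt)
    · intro t ht
      rw [interior_Icc] at ht
      exact ((hψ t (Ioo_subset_Icc_self ht)).differentiableAt.differentiableWithinAt)
    · intro t ht
      rw [interior_Icc] at ht
      rw [(hψ t (Ioo_subset_Icc_self ht)).deriv]
      have h2 := hglb t ⟨by linarith [ht.1], le_of_lt ht.2⟩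
      rw [abs_of_pos ht.1] at h2
      linarith
  have hgd : 0 ≤ g d := by
    have := hmono ⟨le_refl 0, le_of_lt hd⟩ ⟨le_of_lt hd, le_refl d⟩ (le_of_lt hd)
    have hb' := (abs_le.mp hb).1
    simp only at this
    nlinarith
  have hχ : ∀ t ∈ Icc (-d) (0:ℝ), HasDerivAt (fun t => g t - (a * t + M * t ^ 2 / 2))
      (g' t - (a + M * t)) t := by
    intro t ht
    have h1 : HasDerivAt (fun t : ℝ => a * t + M * t ^ 2 / 2) (a + M * t) t := by
      have := ((hasDerivAt_id t).const_mul a).add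
        ((((hasDerivAt_id t).pow 2).const_mul M).div_const 2)
      simpa [mul_comm, mul_assoc, mul_div_assoc, Pi.add_def] using this
    exact (hderiv t ⟨ht.1, by linarith [ht.2]⟩).sub h1
  have hmono' : MonotoneOn (fun t => g t - (a * t + M * t ^ 2 / 2)) (Icc (-d) (0:ℝ)) := by
    apply monotoneOn_of_deriv_nonneg (convex_Icc (-d) 0)
    · exact fun t ht => ((hχ t ht).continuousAt.continuousWithinAt)
    · intro t ht
      rw [interior_Icc] at ht
      exact ((hχ t (Ioo_subset_Icc_self ht)).differentiableAt.differentiableWithinAt)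
    · intro t ht
      rw [interior_Icc] at ht
      rw [(hχ t (Ioo_subset_Icc_self ht)).deriv]
      have h2 := hglb t ⟨le_of_lt ht.1, by linarith [ht.2]⟩
      rw [abs_of_neg ht.2] at h2
      linarith
  have hgnd : g (-d) ≤ 0 := by
    have := hmono' ⟨le_refl (-d), by linarith⟩ ⟨by linarith, le_refl 0⟩ (by linarith)
    have hb' := (abs_le.mp hb).2
    simp only at this
    nlinarith
  obtain ⟨t, ht, hgt⟩ := intermediate_value_Icc hdd hcont ⟨hgnd, hgd⟩
  exact ⟨t, abs_le.mpr ⟨ht.1, ht.2⟩, hgt⟩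

open Set in
/-- Zero-finding lemma: a `C¹` function on `[-d, d]` whose derivative starts large
and is `M`-Lipschitz has a zero, provided the starting value is small. -/
private lemma rleb_exists_zero (g g' : ℝ → ℝ) (d a b M : ℝ) (hd : 0 < d)
    (hderiv : ∀ t ∈ Icc (-d) d, HasDerivAt g (g' t) t)
    (hlip : ∀ t ∈ Icc (-d) d, |g' t - g' 0| ≤ M * |t|)
    (ha' : a ≤ |g' 0|) (hb : |g 0| ≤ b)
    (hgap : b ≤ a * d - M * d ^ 2 / 2) :
    ∃ t, |t| ≤ d ∧ g t = 0 := by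
  rcases le_or_gt 0 (g' 0) with h | h
  · exact rleb_exists_zero_pos g g' d a b M hd hderiv hlip
      (by rwa [abs_of_nonneg h] at ha') hb hgap
  · obtain ⟨t, ht, hgt⟩ := rleb_exists_zero_pos (fun t => -g t) (fun t => -g' t) d a b M hd
      (fun t htm => (hderiv t htm).neg)
      (fun t htm => by
        rw [show -g' t - -g' 0 = -(g' t - g' 0) by ring, abs_neg]; exact hlip t htm)
      (by rwa [abs_of_neg h] at ha') (by simpa using hb) hgap
    exact ⟨t, ht, by simpa using hgt⟩

open Set in
/-- Mean value estimate: a derivative bound `M` gives a Lipschitz bound from `0`. -/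
private lemma rleb_lip (f f' : ℝ → ℝ) (d M : ℝ) (hd : 0 ≤ d)
    (hf : ∀ t ∈ Icc (-d) d, HasDerivAt f (f' t) t)
    (hb : ∀ t ∈ Icc (-d) d, |f' t| ≤ M) :
    ∀ t ∈ Icc (-d) d, |f t - f 0| ≤ M * |t| := by
  intro t ht
  have h0 : (0:ℝ) ∈ Icc (-d) d := ⟨by linarith, hd⟩
  have := (convex_Icc (-d) d).norm_image_sub_le_of_norm_hasDerivWithin_le
    (f := f) (f' := f') (fun x hx => (hf x hx).hasDerivWithinAt)
    (fun x hx => hb x hx) h0 ht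
  simpa using this

private lemma rleb_curve {n : ℕ} (x₀ v₁ : EuclideanSpace ℝ (Fin n)) (t : ℝ) :
    HasDerivAt (fun t : ℝ => x₀ + t • v₁) v₁ t := by
  simpa using ((hasDerivAt_id t).smul_const v₁).const_add x₀

private lemma rleb_deriv1 {n : ℕ} (F : EuclideanSpace ℝ (Fin n) → ℝ) (hF : ContDiff ℝ 3 F)
    (x₀ v₁ : EuclideanSpace ℝ (Fin n)) (e : EuclideanSpace ℝ (Fin n)) (t : ℝ) :
    HasDerivAt (fun t : ℝ => fderiv ℝ F (x₀ + t • v₁) e)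
      (iteratedFDeriv ℝ 2 F (x₀ + t • v₁) ![v₁, e]) t := by
  have hF1 : ContDiff ℝ 2 (fderiv ℝ F) := hF.fderiv_right (by norm_num)
  have h1 : HasFDerivAt (fderiv ℝ F) (fderiv ℝ (fderiv ℝ F) (x₀ + t • v₁)) (x₀ + t • v₁) :=
    ((hF1.differentiable (by norm_num)) _).hasFDerivAt
  have h2 := h1.comp_hasDerivAt t (rleb_curve x₀ v₁ t)
  have h3 := h2.clm_apply (hasDerivAt_const t e)
  simp only [map_zero, add_zero] at h3
  rw [iteratedFDeriv_two_apply]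
  simpa using h3

private lemma rleb_deriv2 {n : ℕ} (F : EuclideanSpace ℝ (Fin n) → ℝ) (hF : ContDiff ℝ 3 F)
    (x₀ v₁ : EuclideanSpace ℝ (Fin n)) (m : Fin 2 → EuclideanSpace ℝ (Fin n)) (t : ℝ) :
    HasDerivAt (fun t : ℝ => iteratedFDeriv ℝ 2 F (x₀ + t • v₁) m)
      (iteratedFDeriv ℝ 3 F (x₀ + t • v₁) (Fin.cons v₁ m)) t := by
  have hF2 : ContDiff ℝ 1 (iteratedFDeriv ℝ 2 F) := hF.iteratedFDeriv_right (by norm_num)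
  have h1 : HasFDerivAt (iteratedFDeriv ℝ 2 F)
      (fderiv ℝ (iteratedFDeriv ℝ 2 F) (x₀ + t • v₁)) (x₀ + t • v₁) :=
    ((hF2.differentiable (by norm_num)) _).hasFDerivAt
  have h2 := h1.comp_hasDerivAt t (rleb_curve x₀ v₁ t)
  have h3 := (ContinuousMultilinearMap.apply ℝ
      (fun _ : Fin 2 => EuclideanSpace ℝ (Fin n)) ℝ m).hasFDerivAt.comp_hasDerivAt t h2
  rw [iteratedFDeriv_succ_apply_left]
  simp only [Fin.cons_zero, Fin.tail_cons]
  exact h3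


private lemma rleb_one_le_sqrt {x : ℝ} (hx : 1 ≤ x) : 1 ≤ Real.sqrt x := by
  have := Real.sqrt_le_sqrt hx
  rwa [Real.sqrt_one] at this

private lemma rleb_sqrt_le_self {x : ℝ} (hx : 1 ≤ x) : Real.sqrt x ≤ x := by
  have h0 : 0 ≤ x := by linarith
  have h1 : x ≤ x ^ 2 := by nlinarith
  have := Real.sqrt_le_sqrt h1
  rwa [Real.sqrt_sq h0] at this

private lemma rleb_sq_le_one {p : ℝ} (h : |p| ≤ 1) : p ^ 2 ≤ 1 := by
  nlinarith [abs_nonneg p, sq_abs p]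

set_option maxHeartbeats 2000000 in
open EuclideanSpace in
/-- Ridge-location error bound (the paper's Theorem 2). Let
`F : ℝⁿ → ℝ` (`n ≥ 2`) be `C³`, `x₀` a point with `∇F(x₀) ≠ 0`, `H` the
Hessian of `F` at `x₀`, `v₁` a unit eigenvector for the smallest eigenvalue
`λ₁ < 0` of `H`, `λₙ ≥ 0` the largest eigenvalue, and `⟪v₁, ∇F(x₀)⟫ = 0`.
Set `d = 2√(n−1)·‖∇F(x₀)‖/|λ₁|` and let `M` bound `|D³F(ξ)(v₁,·,·)|` on the
normal segment. If `M ≤ (1/2)·λ₁²/(n·√(n−1)·‖∇F(x₀)‖)` and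
`λ₁/n + (1 − 1/n)·λₙ + d·M < 0`, then some point `x* = x₀ + t·v₁` with
`|t| ≤ d` is a coordinate local maximum: `∂F/∂x_j(x*) = 0` and
`∂²F/∂x_j²(x*) < 0` for some standard-basis direction `e_j`. -/
theorem ridge_location_error_bound
    (n : ℕ) (hn : 2 ≤ n)
    (F : EuclideanSpace ℝ (Fin n) → ℝ) (hF : ContDiff ℝ 3 F)
    (x₀ : EuclideanSpace ℝ (Fin n)) (hgrad : gradient F x₀ ≠ 0)
    (H : EuclideanSpace ℝ (Fin n) →ₗ[ℝ] EuclideanSpace ℝ (Fin n))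
    (hH : ∀ u w : EuclideanSpace ℝ (Fin n),
      (inner ℝ (H u) w : ℝ) = iteratedFDeriv ℝ 2 F x₀ ![u, w])
    (lam₁ lamn : ℝ) (hlam₁neg : lam₁ < 0) (hlamn : 0 ≤ lamn)
    (v₁ : EuclideanSpace ℝ (Fin n)) (hv₁ : ‖v₁‖ = 1)
    (heig : H v₁ = lam₁ • v₁)
    (hmin : ∀ u : EuclideanSpace ℝ (Fin n), ‖u‖ = 1 → lam₁ ≤ (inner ℝ u (H u) : ℝ))
    (hmax : ∀ u : EuclideanSpace ℝ (Fin n), ‖u‖ = 1 → (inner ℝ u (H u) : ℝ) ≤ lamn)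
    (horth : (inner ℝ v₁ (gradient F x₀) : ℝ) = 0)
    (d : ℝ) (hd : d = 2 * Real.sqrt (n - 1) * ‖gradient F x₀‖ / |lam₁|)
    (M : ℝ) (hM0 : 0 ≤ M)
    (hM : ∀ ξ ∈ segment ℝ (x₀ - d • v₁) (x₀ + d • v₁),
      ∀ u w : EuclideanSpace ℝ (Fin n), ‖u‖ = 1 → ‖w‖ = 1 →
        |iteratedFDeriv ℝ 3 F ξ ![v₁, u, w]| ≤ M)
    (hM1 : M ≤ (1 / 2) * lam₁ ^ 2 / (n * Real.sqrt (n - 1) * ‖gradient F x₀‖))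
    (hM2 : lam₁ / n + (1 - 1 / n) * lamn + d * M < 0) :
    ∃ t : ℝ, |t| ≤ d ∧ ∃ j : Fin n,
      fderiv ℝ F (x₀ + t • v₁) (EuclideanSpace.single j 1) = 0 ∧
      iteratedFDeriv ℝ 2 F (x₀ + t • v₁)
        ![EuclideanSpace.single j 1, EuclideanSpace.single j 1] < 0 := by
  classical
  -- Notation
  set G := ‖gradient F x₀‖ with hGdef
  have hG : 0 < G := norm_pos_iff.mpr hgrad
  have hn2 : (2:ℝ) ≤ n := by exact_mod_cast hn
  set s := Real.sqrt ((n:ℝ) - 1) with hsdef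
  have hs1 : 1 ≤ s := rleb_one_le_sqrt (by linarith)
  have hs0 : 0 < s := by linarith
  have hl0 : 0 < |lam₁| := abs_pos.mpr (ne_of_lt hlam₁neg)
  have hrn : 0 < Real.sqrt n := Real.sqrt_pos.mpr (by linarith)
  have hrn2 : Real.sqrt (n:ℝ) ^ 2 = n := Real.sq_sqrt (by linarith)
  have hrnn : Real.sqrt (n:ℝ) ≤ n := rleb_sqrt_le_self (by linarith)
  have hd0 : 0 < d := by rw [hd]; positivity
  have hlam2 : lam₁ ^ 2 = |lam₁| ^ 2 := (sq_abs lam₁).symm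
  -- key numeric bounds
  have hMd : M * d ≤ |lam₁| / n := by
    rw [hd]
    calc M * (2 * s * G / |lam₁|)
        ≤ ((1/2) * lam₁ ^ 2 / (n * s * G)) * (2 * s * G / |lam₁|) := by
          apply mul_le_mul_of_nonneg_right hM1; positivity
      _ = |lam₁| / n := by field_simp; rw [hlam2]
  have hgap : s * G / Real.sqrt n
      ≤ (|lam₁| / Real.sqrt n) * d - M * d ^ 2 / 2 := by
    have had : (|lam₁| / Real.sqrt n) * d = 2 * s * G / Real.sqrt n := by
      rw [hd]; field_simp
    have h2 : M * d ^ 2 / 2 ≤ s * G / n := by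
      have hrw : M * d ^ 2 / 2 = (M * d) * d / 2 := by ring
      rw [hrw]
      calc (M * d) * d / 2 ≤ (|lam₁| / n) * d / 2 := by
            apply div_le_div_of_nonneg_right _ (by norm_num)
            exact mul_le_mul_of_nonneg_right hMd (le_of_lt hd0)
        _ = (|lam₁| / n) * (2 * s * G / |lam₁|) / 2 := by rw [hd]
        _ = s * G / n := by field_simp
    have h3 : s * G / n ≤ s * G / Real.sqrt n :=
      div_le_div_of_nonneg_left (by positivity) hrn hrnn
    rw [had]
    have h4 : 2 * s * G / Real.sqrt n = s * G / Real.sqrt n + s * G / Real.sqrt n := by ring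
    linarith
  -- choose the coordinate
  obtain ⟨j, hpj⟩ : ∃ j : Fin n, 1 / (n:ℝ) ≤ (v₁ j)^2 := by
    have hsum : ∑ i, (v₁ i)^2 = 1 := by
      have h := hv₁
      rw [EuclideanSpace.norm_eq] at h
      have h2 : Real.sqrt (∑ i, ‖v₁ i‖^2) ^ 2 = 1 := by rw [h]; norm_num
      rw [Real.sq_sqrt (Finset.sum_nonneg fun i _ => sq_nonneg ‖v₁ i‖)] at h2
      simpa [Real.norm_eq_abs, sq_abs] using h2
    by_contra hcon
    push_neg at hcon
    haveI : NeZero n := ⟨by omega⟩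
    have hne : (Finset.univ : Finset (Fin n)).Nonempty := Finset.univ_nonempty
    have hlt : ∑ i, (v₁ i)^2 < ∑ _i : Fin n, 1/(n:ℝ) :=
      Finset.sum_lt_sum_of_nonempty hne fun i _ => hcon i
    rw [hsum, Finset.sum_const, Finset.card_univ, Fintype.card_fin, nsmul_eq_mul] at hlt
    have hn0 : (0:ℝ) < n := by linarith
    rw [mul_one_div, div_self (ne_of_gt hn0)] at hlt
    exact lt_irrefl 1 hlt
  set e : EuclideanSpace ℝ (Fin n) := EuclideanSpace.single j 1 with hedef
  have he : ‖e‖ = 1 := by rw [hedef, EuclideanSpace.norm_single]; norm_num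
  set p : ℝ := v₁ j with hpdef
  have hpe : (inner ℝ v₁ e : ℝ) = p := by
    rw [hedef, EuclideanSpace.inner_single_right]; simp; rfl
  have hpabs : 1 / Real.sqrt n ≤ |p| := by
    have h1 := Real.sqrt_le_sqrt hpj
    rw [Real.sqrt_sq_eq_abs] at h1
    calc 1 / Real.sqrt n = Real.sqrt (1 / n) := by
          rw [one_div, one_div, Real.sqrt_inv]
      _ ≤ |p| := h1
  have hp1 : p ^ 2 ≤ 1 := by
    have h := abs_real_inner_le_norm v₁ e
    rw [hpe, hv₁, he] at h
    exact rleb_sq_le_one (by simpa using h)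
  -- orthogonal decomposition of e
  set w : EuclideanSpace ℝ (Fin n) := e - p • v₁ with hwdef
  have hew : e = p • v₁ + w := by rw [hwdef]; abel
  have hvv : (inner ℝ v₁ v₁ : ℝ) = 1 := by
    rw [real_inner_self_eq_norm_sq, hv₁]; norm_num
  have hvw : (inner ℝ v₁ w : ℝ) = 0 := by
    rw [hwdef, inner_sub_right, real_inner_smul_right, hpe, hvv]; ring
  have hpe' : (inner ℝ e v₁ : ℝ) = p := by rw [real_inner_comm]; exact hpe
  have hw2 : ‖w‖^2 = 1 - p^2 := by
    have hpv : ‖p • v₁‖^2 = p^2 := by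
      rw [norm_smul, hv₁, mul_one, Real.norm_eq_abs, sq_abs]
    rw [hwdef, norm_sub_sq_real, real_inner_smul_right, hpe', hpv, he]
    ring
  -- symmetry of H
  have hsym : ∀ u z : EuclideanSpace ℝ (Fin n),
      (inner ℝ (H u) z : ℝ) = (inner ℝ (H z) u : ℝ) := by
    intro u z
    have hsf := (hF.contDiffAt (x := x₀)).isSymmSndFDerivAt (by norm_num)
    rw [hH, hH, iteratedFDeriv_two_apply, iteratedFDeriv_two_apply]
    simpa using hsf u z
  -- membership of the segment
  have hmemseg : ∀ t ∈ Set.Icc (-d) d,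
      x₀ + t • v₁ ∈ segment ℝ (x₀ - d • v₁) (x₀ + d • v₁) := by
    intro t ht
    refine ⟨(d - t) / (2 * d), (d + t) / (2 * d), ?_, ?_, ?_, ?_⟩
    · have h1 := ht.2
      have h2 : 0 ≤ d - t := by linarith
      positivity
    · have h1 := ht.1
      have h2 : 0 ≤ d + t := by linarith
      positivity
    · field_simp; ring
    · match_scalars <;> field_simp <;> ring
  -- the three functions along the normal line
  set g₁ : ℝ → ℝ := fun t => fderiv ℝ F (x₀ + t • v₁) e with hg₁def
  set g₂ : ℝ → ℝ := fun t => iteratedFDeriv ℝ 2 F (x₀ + t • v₁) ![v₁, e] with hg₂def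
  set g₃ : ℝ → ℝ := fun t => iteratedFDeriv ℝ 2 F (x₀ + t • v₁) ![e, e] with hg₃def
  have hx00 : x₀ + (0:ℝ) • v₁ = x₀ := by simp
  have hg₁d : ∀ t ∈ Set.Icc (-d) d, HasDerivAt g₁ (g₂ t) t := fun t _ =>
    rleb_deriv1 F hF x₀ v₁ e t
  have hg₂d : ∀ t : ℝ, HasDerivAt g₂
      (iteratedFDeriv ℝ 3 F (x₀ + t • v₁) ![v₁, v₁, e]) t := fun t =>
    rleb_deriv2 F hF x₀ v₁ ![v₁, e] t
  have hg₃d : ∀ t : ℝ, HasDerivAt g₃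
      (iteratedFDeriv ℝ 3 F (x₀ + t • v₁) ![v₁, e, e]) t := fun t =>
    rleb_deriv2 F hF x₀ v₁ ![e, e] t
  have hlip₂ : ∀ t ∈ Set.Icc (-d) d, |g₂ t - g₂ 0| ≤ M * |t| :=
    rleb_lip g₂ _ d M (le_of_lt hd0) (fun t _ => hg₂d t)
      (fun t ht => hM _ (hmemseg t ht) v₁ e hv₁ he)
  have hlip₃ : ∀ t ∈ Set.Icc (-d) d, |g₃ t - g₃ 0| ≤ M * |t| :=
    rleb_lip g₃ _ d M (le_of_lt hd0) (fun t _ => hg₃d t)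
      (fun t ht => hM _ (hmemseg t ht) e e he he)
  -- initial values
  have hg₂0 : g₂ 0 = lam₁ * p := by
    rw [hg₂def]
    simp only [hx00]
    rw [← hH v₁ e, heig, real_inner_smul_left, hpe]
  have hg₂0abs : |lam₁| / Real.sqrt n ≤ |g₂ 0| := by
    rw [hg₂0, abs_mul]
    calc |lam₁| / Real.sqrt n = |lam₁| * (1 / Real.sqrt n) := by ring
      _ ≤ |lam₁| * |p| := mul_le_mul_of_nonneg_left hpabs (abs_nonneg _)
  have hwnorm : ‖w‖ ≤ s / Real.sqrt n := by
    have h1 : ‖w‖^2 ≤ 1 - 1/(n:ℝ) := by rw [hw2]; linarith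
    have h2 : ‖w‖ = Real.sqrt (‖w‖^2) := (Real.sqrt_sq (norm_nonneg w)).symm
    rw [h2]
    calc Real.sqrt (‖w‖^2) ≤ Real.sqrt (1 - 1/(n:ℝ)) := Real.sqrt_le_sqrt h1
      _ = Real.sqrt (((n:ℝ) - 1) / n) := by
          congr 1
          field_simp
      _ = s / Real.sqrt n := by
          rw [hsdef, Real.sqrt_div (by linarith : (0:ℝ) ≤ (n:ℝ) - 1)]
  have hg₁0 : |g₁ 0| ≤ s * G / Real.sqrt n := by
    have hpair : g₁ 0 = (inner ℝ (gradient F x₀) w : ℝ) := by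
      rw [hg₁def]
      simp only [hx00]
      have h1 : (inner ℝ (gradient F x₀) e : ℝ) = fderiv ℝ F x₀ e :=
        InnerProductSpace.toDual_symm_apply
      have horth' : (inner ℝ (gradient F x₀) v₁ : ℝ) = 0 := by
        rw [real_inner_comm]; exact horth
      rw [← h1, hew, inner_add_right, real_inner_smul_right, horth']
      ring
    rw [hpair]
    calc |(inner ℝ (gradient F x₀) w : ℝ)| ≤ G * ‖w‖ := by
          rw [hGdef]; exact abs_real_inner_le_norm _ _
      _ ≤ G * (s / Real.sqrt n) := mul_le_mul_of_nonneg_left hwnorm (le_of_lt hG)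
      _ = s * G / Real.sqrt n := by ring
  -- find the zero of the first derivative
  obtain ⟨t, htd, hzero⟩ := rleb_exists_zero g₁ g₂ d (|lam₁| / Real.sqrt n)
    (s * G / Real.sqrt n) M hd0 hg₁d hlip₂ hg₂0abs hg₁0 hgap
  refine ⟨t, htd, j, hzero, ?_⟩
  -- second derivative bound at the zero
  have htmem : t ∈ Set.Icc (-d) d := abs_le.mp htd |> fun h => ⟨h.1, h.2⟩
  have h3lip := hlip₃ t htmem
  have hg₃0 : g₃ 0 = (inner ℝ (H e) e : ℝ) := by
    rw [hg₃def]
    simp only [hx00]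
    rw [hH e e]
  -- quadratic form bound
  have hHv₁w : (inner ℝ (H v₁) w : ℝ) = 0 := by
    rw [heig, real_inner_smul_left, hvw, mul_zero]
  have hHwv₁ : (inner ℝ (H w) v₁ : ℝ) = 0 := by rw [← hsym, hHv₁w]
  have hHww : (inner ℝ (H w) w : ℝ) ≤ lamn * ‖w‖^2 := by
    by_cases hw0 : w = 0
    · simp [hw0]
    · have hwn : 0 < ‖w‖ := norm_pos_iff.mpr hw0
      have hu : ‖(‖w‖⁻¹ • w)‖ = 1 := by
        rw [norm_smul, norm_inv, norm_norm, inv_mul_cancel₀ (ne_of_gt hwn)]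
      have h1 := hmax (‖w‖⁻¹ • w) hu
      rw [map_smul, real_inner_smul_left, real_inner_smul_right] at h1
      have h2 : (inner ℝ w (H w) : ℝ) ≤ lamn * ‖w‖^2 := by
        have h3 := mul_le_mul_of_nonneg_left h1 (le_of_lt (mul_pos hwn hwn))
        have hx : ‖w‖ * ‖w‖ * (‖w‖⁻¹ * (‖w‖⁻¹ * (inner ℝ w (H w) : ℝ)))
            = (inner ℝ w (H w) : ℝ) := by field_simp
        rw [hx] at h3
        have h4 : ‖w‖ * ‖w‖ * lamn = lamn * ‖w‖^2 := by ring
        linarith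
      rw [real_inner_comm]
      exact h2
  have hHee : (inner ℝ (H e) e : ℝ) ≤ lam₁ * p^2 + lamn * (1 - p^2) := by
    calc (inner ℝ (H e) e : ℝ)
        = p * p * (inner ℝ (H v₁) v₁ : ℝ) + p * (inner ℝ (H v₁) w : ℝ)
          + p * (inner ℝ (H w) v₁ : ℝ) + (inner ℝ (H w) w : ℝ) := by
          rw [hew, map_add, map_smul]
          rw [inner_add_left, inner_add_right, inner_add_right,
            real_inner_smul_left, real_inner_smul_left,
            real_inner_smul_right, real_inner_smul_right]
          ring
      _ = lam₁ * p^2 + (inner ℝ (H w) w : ℝ) := by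
          rw [hHv₁w, hHwv₁, heig, real_inner_smul_left, hvv]
          ring
      _ ≤ lam₁ * p^2 + lamn * (1 - p^2) := by rw [← hw2]; linarith [hHww]
  -- conclude
  have hq : lam₁ * p^2 + lamn * (1 - p^2) ≤ lam₁ / n + (1 - 1/n) * lamn := by
    have hn0 : (0:ℝ) < n := by linarith
    have h1 : lam₁ * p^2 ≤ lam₁ * (1/n) :=
      mul_le_mul_of_nonpos_left hpj (le_of_lt hlam₁neg)
    have h2 : lamn * (1 - p^2) ≤ lamn * (1 - 1/n) :=
      mul_le_mul_of_nonneg_left (by linarith) hlamn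
    calc lam₁ * p^2 + lamn * (1 - p^2) ≤ lam₁ * (1/n) + lamn * (1 - 1/n) := by linarith
      _ = lam₁ / n + (1 - 1/n) * lamn := by ring
  have hMt : M * |t| ≤ M * d := mul_le_mul_of_nonneg_left htd hM0
  have habs := (abs_le.mp h3lip).2
  have hfin : g₃ t < 0 := by
    have : g₃ t ≤ g₃ 0 + M * d := by linarith
    rw [hg₃0] at this
    linarith [hHee, hq, hM2, this]
  exact hfin
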